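/- arXiv:hep-th/0101079 — 2 statements merged into one kernel-verified Lean document; each statement's English description precedes it below -/
import Mathlib

section
/- With the star product defined by e^{φ(f)} *_ℏ e^{φ(g)} = e^{φ(f+g)} e^{ℏ B'(f,g)} for a bilinear form B', and a second bilinear form B'' whose antisymmetric part coincides with that of B' (i.e. B''(f,g) − B''(g,f) = B'(f,g) − B'(g,f) for all f, g), define T_ℏ(e^{φ(f)}) := e^{φ(f)} e^{(ℏ/2)(B''(f,f) − B'(f,f))}. Then T_ℏ intertwines the two star products: T_ℏ(e^{φ(f)}) *_ℏ^{B''} T_ℏ(e^{φ(g)}) = T_ℏ(e^{φ(f)} *_ℏ^{B'} e^{φ(g)}) for all f, g. -/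
/-- The twisted product on formal exponentials `e^{φ(f)}` (modeled as
`Finsupp.single f 1` in `V →₀ ℂ`), determined by
`e^{φ(f)} *_ℏ^B e^{φ(g)} = e^{φ(f+g)} · exp (ℏ B(f,g))`. -/
noncomputable def starE {V : Type*} [AddCommGroup V] [Module ℂ V]
    (B : V →ₗ[ℂ] V →ₗ[ℂ] ℂ) (ℏ : ℂ) (t s : V →₀ ℂ) : V →₀ ℂ :=
  t.sum fun f a => s.sum fun g b =>
    Finsupp.single (f + g) (a * b * Complex.exp (ℏ * B f g))

/-- The intertwiner `T_ℏ(e^{φ(f)}) = e^{φ(f)} · exp((ℏ/2)(B''(f,f) − B'(f,f)))`,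
extended linearly. -/
noncomputable def Tmap {V : Type*} [AddCommGroup V] [Module ℂ V]
    (B' B'' : V →ₗ[ℂ] V →ₗ[ℂ] ℂ) (ℏ : ℂ) (t : V →₀ ℂ) : V →₀ ℂ :=
  t.sum fun f a =>
    Finsupp.single f (a * Complex.exp ((ℏ / 2) * (B'' f f - B' f f)))

/-- if `B'` and `B''` have the same antisymmetric part, then
`T_ℏ` intertwines the star products `*_ℏ^{B''}` and `*_ℏ^{B'}` on exponentials. -/
theorem Tmap_intertwines {V : Type*} [AddCommGroup V] [Module ℂ V]
    (B' B'' : V →ₗ[ℂ] V →ₗ[ℂ] ℂ)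
    (hanti : ∀ f g : V, B'' f g - B'' g f = B' f g - B' g f)
    (ℏ : ℂ) (f g : V) :
    starE B'' ℏ (Tmap B' B'' ℏ (Finsupp.single f 1)) (Tmap B' B'' ℏ (Finsupp.single g 1))
      = Tmap B' B'' ℏ (starE B' ℏ (Finsupp.single f 1) (Finsupp.single g 1)) := by
  simp only [starE, Tmap, Finsupp.sum_single_index, zero_mul, Finsupp.single_zero,
    Finsupp.sum_fun_zero, one_mul, mul_zero]
  congr 1
  rw [← Complex.exp_add, ← Complex.exp_add, ← Complex.exp_add]
  congr 1
  have h := hanti f g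
  simp only [map_add, LinearMap.add_apply]
  ring_nf
  linear_combination (ℏ / 2) * h
end

section
/- The k-times contracted tensor product makes W = ⊕_n W_n into an associative algebra: for the product defined by (t * s)_n = Σ_{n+2k = l+m} ℏ^k t_m ⊗_k s_l, where ⊗_k is the k-fold contraction with a fixed bilinear pairing, associativity holds: (t * s) * u = t * (s * u). Abstract combinatorial version: on the symmetric algebra S(V) over a vector space V equipped with a symmetric bilinear form β, the product defined on symmetric tensors by summing over all ways to contract k pairs between factors (with weight ℏ^k β-values and the multinomial coefficient m! l! / (k!(m−k)!(l−k)!)) is associative. -/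
open MvPolynomial

/-- The contraction operator `Γ = Σ_{i,j} β(i,j) ∂_{left i} ∂_{right j}` acting on
`S(V) ⊗ S(V)`, modeled as `MvPolynomial (ι ⊕ ι) R` (left/right tensor factors). -/
noncomputable def contr {ι : Type*} [Fintype ι] [DecidableEq ι]
    (R : Type*) [CommRing R] (β : ι → ι → R) :
    Module.End R (MvPolynomial (ι ⊕ ι) R) :=
  ∑ i : ι, ∑ j : ι,
    β i j • ((pderiv (Sum.inl i)).toLinearMap ∘ₗ (pderiv (Sum.inr j)).toLinearMap)

/-- The Wick (contraction) product on the symmetric algebra `S(V)`, modeled as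
`MvPolynomial ι R` (`V` with basis `ι`, symmetric form `β`, deformation parameter `ℏ`):
`u * v = mul (exp (ℏ Γ) (u ⊗ v)) = Σ_k (ℏ^k/k!) mul (Γ^k (u ⊗ v))`, which on monomials
gives the sum over all ways to contract `k` pairs with weights `ℏ^k` and β-values,
with the multinomial coefficients of Wick's theorem. -/
noncomputable def wick {ι : Type*} [Fintype ι] [DecidableEq ι]
    (R : Type*) [CommRing R] [Algebra ℚ R] (β : ι → ι → R) (ℏ : R)
    (u v : MvPolynomial ι R) : MvPolynomial ι R :=
  rename (Sum.elim id id) <|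
    ∑ k ∈ Finset.range (u.totalDegree + v.totalDegree + 1),
      (k.factorial : ℚ)⁻¹ •
        (ℏ ^ k • ((contr R β ^ k) (rename Sum.inl u * rename Sum.inr v)))

namespace WickAux
variable {σ : Type*} {R : Type*} [CommRing R]

lemma pderiv_comm' (i j : σ) (p : MvPolynomial σ R) :
    pderiv i (pderiv j p) = pderiv j (pderiv i p) := by
  classical
  induction p using MvPolynomial.induction_on' with
  | add p q hp hq => simp [hp, hq]
  | monomial s a =>
      by_cases h : i = j
      · simp [h]
      · simp only [pderiv_monomial]
        rw [tsub_tsub, tsub_tsub, add_comm (Finsupp.single j 1)]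
        congr 1
        · rw [Finsupp.tsub_apply, Finsupp.tsub_apply, Finsupp.single_apply,
            Finsupp.single_apply]
          simp [h, Ne.symm h]
          ring

-- totalDegree of pderiv
lemma totalDegree_pderiv_le' (i : σ) (p : MvPolynomial σ R) (d : ℕ)
    (h : p.totalDegree ≤ d + 1) : (pderiv i p).totalDegree ≤ d := by
  classical
  conv_lhs => rw [p.as_sum]
  rw [map_sum]
  apply totalDegree_finset_sum _ _ |>.trans
  apply Finset.sup_le
  intro s hs
  rw [pderiv_monomial]
  by_cases hsi : s i = 0
  · simp [hsi]
  · apply (totalDegree_monomial_le _ _).trans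
    have h1 : Finsupp.single i 1 ≤ s := by
      rw [Finsupp.single_le_iff]; omega
    have h2 : (s - Finsupp.single i 1) + Finsupp.single i 1 = s :=
      tsub_add_cancel_of_le h1
    have h3 : ((s - Finsupp.single i 1) + Finsupp.single i 1).sum (fun _ e => e)
        = (s - Finsupp.single i 1).sum (fun _ e => e) + 1 := by
      rw [Finsupp.sum_add_index' (fun _ => rfl) (fun _ _ _ => rfl),
        Finsupp.sum_single_index rfl]
    have h4 : s.sum (fun _ e => e) ≤ d + 1 := (le_totalDegree hs).trans h
    rw [h2] at h3
    have : ((s - Finsupp.single i 1).sum fun _ e => e) ≤ d := by omega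
    exact this


lemma pderiv_eq_zero_of_totalDegree_eq_zero (i : σ) (p : MvPolynomial σ R)
    (h : p.totalDegree = 0) : pderiv i p = 0 := by
  classical
  apply pderiv_eq_zero_of_notMem_vars
  intro hv
  rw [mem_vars] at hv
  obtain ⟨m, hm, hi⟩ := hv
  rw [totalDegree_eq_zero_iff] at h
  exact absurd (h m hm i) (by simpa [Finsupp.mem_support_iff] using hi)

/-- Predicate: `D` is a "second-order lowering operator": it lowers total degree
by at least 2, and kills polynomials of degree ≤ 1. -/
def SecOrd (D : Module.End R (MvPolynomial σ R)) : Prop :=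
  (∀ (p : MvPolynomial σ R) (d : ℕ), p.totalDegree ≤ d + 2 → (D p).totalDegree ≤ d) ∧
  (∀ p : MvPolynomial σ R, p.totalDegree ≤ 1 → D p = 0)

lemma secOrd_zero : SecOrd (0 : Module.End R (MvPolynomial σ R)) :=
  ⟨fun p d _ => by simp, fun p _ => rfl⟩

lemma SecOrd.add {D E : Module.End R (MvPolynomial σ R)} (hD : SecOrd D) (hE : SecOrd E) :
    SecOrd (D + E) := by
  refine ⟨fun p d h => ?_, fun p h => ?_⟩
  · simp only [LinearMap.add_apply]
    exact (totalDegree_add _ _).trans (max_le (hD.1 p d h) (hE.1 p d h))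
  · simp [LinearMap.add_apply, hD.2 p h, hE.2 p h]

lemma SecOrd.smul {D : Module.End R (MvPolynomial σ R)} (hD : SecOrd D) (c : R) :
    SecOrd (c • D) := by
  refine ⟨fun p d h => ?_, fun p h => ?_⟩
  · simp only [LinearMap.smul_apply]
    exact (totalDegree_smul_le _ _).trans (hD.1 p d h)
  · simp [LinearMap.smul_apply, hD.2 p h]

lemma secOrd_pp (a b : σ) :
    SecOrd ((pderiv (R := R) a).toLinearMap ∘ₗ (pderiv b).toLinearMap) := by
  refine ⟨fun p d h => ?_, fun p h => ?_⟩
  · exact totalDegree_pderiv_le' _ _ _ (totalDegree_pderiv_le' _ _ _ h)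
  · have : (pderiv b p).totalDegree = 0 :=
      Nat.le_zero.mp (totalDegree_pderiv_le' _ _ _ h)
    simpa using pderiv_eq_zero_of_totalDegree_eq_zero a _ this

lemma SecOrd.sum {α : Type*} (s : Finset α) (f : α → Module.End R (MvPolynomial σ R))
    (h : ∀ a ∈ s, SecOrd (f a)) : SecOrd (∑ a ∈ s, f a) := by
  classical
  induction s using Finset.induction_on with
  | empty => simpa using secOrd_zero
  | insert a s hx ih =>
      rw [Finset.sum_insert hx]
      exact (h _ (Finset.mem_insert_self _ _)).add
        (ih fun a ha => h a (Finset.mem_insert_of_mem ha))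

lemma SecOrd.pow_deg {D : Module.End R (MvPolynomial σ R)} (hD : SecOrd D)
    (k : ℕ) (p : MvPolynomial σ R) (d : ℕ) (h : p.totalDegree ≤ d + 2 * k) :
    ((D ^ k) p).totalDegree ≤ d := by
  induction k generalizing p with
  | zero => simpa using h
  | succ k ih =>
      rw [pow_succ, Module.End.mul_apply]
      exact ih _ (hD.1 p (d + 2 * k) (by omega))

lemma SecOrd.pow_eq_zero {D : Module.End R (MvPolynomial σ R)} (hD : SecOrd D)
    {k : ℕ} {p : MvPolynomial σ R} (h : p.totalDegree < 2 * k) : (D ^ k) p = 0 := by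
  induction k generalizing p with
  | zero => omega
  | succ k ih =>
      rw [pow_succ, Module.End.mul_apply]
      by_cases h1 : p.totalDegree ≤ 1
      · rw [hD.2 p h1, map_zero]
      · exact ih (lt_of_le_of_lt (hD.1 p (p.totalDegree - 2) (by omega)) (by omega))

section Exp
variable [Algebra ℚ R]

/-- Truncated exponential `Σ_{k<N} (h^k/k!) D^k p`. -/
noncomputable def E (D : Module.End R (MvPolynomial σ R)) (h : R) (N : ℕ)
    (p : MvPolynomial σ R) : MvPolynomial σ R :=
  ∑ k ∈ Finset.range N, (k.factorial : ℚ)⁻¹ • (h ^ k • ((D ^ k) p))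

lemma E_stable {D : Module.End R (MvPolynomial σ R)} (hD : SecOrd D) (h : R)
    {N M : ℕ} {p : MvPolynomial σ R} (hN : p.totalDegree + 1 ≤ N) (hNM : N ≤ M) :
    E D h M p = E D h N p := by
  unfold E
  apply (Finset.sum_subset (Finset.range_subset_range.mpr hNM) ?_).symm
  intro k _ hk
  rw [Finset.mem_range, not_lt] at hk
  rw [hD.pow_eq_zero (by omega), smul_zero, smul_zero]

lemma E_deg {D : Module.End R (MvPolynomial σ R)} (hD : SecOrd D) (h : R)
    (N : ℕ) (p : MvPolynomial σ R) : (E D h N p).totalDegree ≤ p.totalDegree := by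
  apply totalDegree_finset_sum _ _ |>.trans
  apply Finset.sup_le
  intro k _
  exact (totalDegree_smul_le _ _).trans <| (totalDegree_smul_le _ _).trans <|
    hD.pow_deg k p _ (by omega)

lemma pow_apply_eq_zero_of_lt {D F : Module.End R (MvPolynomial σ R)}
    (hD : SecOrd D) (hF : SecOrd F) {i j : ℕ} {p : MvPolynomial σ R}
    (h : p.totalDegree < 2 * (i + j)) : (D ^ i) ((F ^ j) p) = 0 := by
  by_cases hj : p.totalDegree < 2 * j
  · rw [hF.pow_eq_zero hj, map_zero]
  · exact hD.pow_eq_zero (lt_of_le_of_lt (hF.pow_deg j p (p.totalDegree - 2 * j)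
      (by omega)) (by omega))

lemma sum_triangle {M : Type*} [AddCommMonoid M] (N : ℕ) (f : ℕ → ℕ → M) :
    ∑ n ∈ Finset.range N, ∑ k ∈ Finset.range (n + 1), f k (n - k) =
      ∑ q ∈ (Finset.range N ×ˢ Finset.range N).filter (fun q => q.1 + q.2 < N),
        f q.1 q.2 := by
  rw [Finset.sum_sigma']
  apply Finset.sum_nbij' (fun x => (x.2, x.1 - x.2)) (fun q => ⟨q.1 + q.2, q.1⟩)
  · rintro ⟨n, k⟩ hx
    simp only [Finset.mem_sigma, Finset.mem_range] at hx
    simp only [Finset.mem_filter, Finset.mem_product, Finset.mem_range]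
    omega
  · rintro ⟨i, j⟩ hq
    simp only [Finset.mem_filter, Finset.mem_product, Finset.mem_range] at hq
    simp only [Finset.mem_sigma, Finset.mem_range]
    omega
  · rintro ⟨n, k⟩ hx
    simp only [Finset.mem_sigma, Finset.mem_range] at hx
    simp only [Sigma.mk.inj_iff]
    constructor
    · omega
    · simp
  · rintro ⟨i, j⟩ hq
    simp
  · rintro ⟨n, k⟩ hx
    rfl

lemma E_split {D F : Module.End R (MvPolynomial σ R)} (hD : SecOrd D) (hF : SecOrd F)
    (hC : Commute D F) (h : R) {N : ℕ} {p : MvPolynomial σ R}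
    (hN : p.totalDegree + 1 ≤ N) :
    E (D + F) h N p = E D h N (E F h N p) := by
  have key : ∀ n, ((n.factorial : ℚ)⁻¹ • (h ^ n • (((D + F) ^ n) p))) =
      ∑ k ∈ Finset.range (n + 1),
        ((k.factorial : ℚ)⁻¹ • ((h ^ k) •
          (((n - k).factorial : ℚ)⁻¹ • (h ^ (n - k) • ((D ^ k) ((F ^ (n - k)) p)))))) := by
    intro n
    rw [hC.add_pow, LinearMap.sum_apply, Finset.smul_sum, Finset.smul_sum]
    apply Finset.sum_congr rfl
    intro k hk
    rw [Finset.mem_range] at hk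
    have hkn : k ≤ n := by omega
    rw [Module.End.mul_apply, Module.End.mul_apply, Module.End.natCast_apply,
      map_nsmul, map_nsmul, ← Nat.cast_smul_eq_nsmul ℚ]
    rw [smul_comm (h ^ n) ((n.choose k : ℚ)), smul_smul]
    rw [smul_comm (h ^ k) ((((n - k).factorial : ℚ))⁻¹),
      smul_smul ((k.factorial : ℚ)⁻¹), smul_smul (h ^ k) (h ^ (n - k)),
      ← pow_add, Nat.add_sub_cancel' hkn]
    congr 1
    rw [Nat.cast_choose ℚ hkn]
    have h1 : ((k.factorial : ℚ)) ≠ 0 := Nat.cast_ne_zero.mpr k.factorial_ne_zero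
    have h2 : (((n - k).factorial : ℚ)) ≠ 0 := Nat.cast_ne_zero.mpr (n - k).factorial_ne_zero
    field_simp
  unfold E
  rw [Finset.sum_congr rfl (fun n _ => key n), sum_triangle N
    (fun i j => (i.factorial : ℚ)⁻¹ • ((h ^ i) •
      ((j.factorial : ℚ)⁻¹ • (h ^ j • ((D ^ i) ((F ^ j) p))))))]
  rw [Finset.sum_subset (Finset.filter_subset _ _)]
  · rw [Finset.sum_product]
    apply Finset.sum_congr rfl
    intro i _
    rw [map_sum, Finset.smul_sum, Finset.smul_sum]
    apply Finset.sum_congr rfl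
    intro j _
    rw [LinearMap.map_smul_of_tower, LinearMap.map_smul_of_tower]
  · rintro ⟨i, j⟩ hq hq2
    simp only [Finset.mem_filter, Finset.mem_product, Finset.mem_range] at hq hq2
    rw [pow_apply_eq_zero_of_lt hD hF (by omega), smul_zero, smul_zero, smul_zero, smul_zero]

lemma E_smul_op (D : Module.End R (MvPolynomial σ R)) (c h : R) (N : ℕ)
    (p : MvPolynomial σ R) : E (c • D) h N p = E D (c * h) N p := by
  unfold E
  apply Finset.sum_congr rfl
  intro k _
  rw [smul_pow, LinearMap.smul_apply, mul_pow, smul_comm (h ^ k), mul_smul]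

lemma E_zero_op (h : R) {N : ℕ} (hN : 1 ≤ N) (p : MvPolynomial σ R) :
    E (0 : Module.End R (MvPolynomial σ R)) h N p = p := by
  unfold E
  rw [Finset.sum_eq_single 0]
  · simp
  · intro k _ hk
    rw [zero_pow hk, LinearMap.zero_apply, smul_zero, smul_zero]
  · intro hk
    simp at hk; omega

/-- `E D h N` and `E D (-h) N` are inverse. -/
lemma E_inv {D : Module.End R (MvPolynomial σ R)} (hD : SecOrd D) (h : R)
    {N : ℕ} {p : MvPolynomial σ R} (hN : p.totalDegree + 1 ≤ N) :
    E D h N (E D (-h) N p) = p := by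
  have h1 : E D (-h) N p = E ((-1 : R) • D) h N p := by
    rw [E_smul_op]; ring_nf
  have h2 : SecOrd ((-1 : R) • D) := hD.smul _
  have h3 : Commute D ((-1 : R) • D) := (Commute.refl D).smul_right _
  rw [h1, ← E_split hD h2 h3 h hN]
  have : D + (-1 : R) • D = 0 := by
    ext q
    simp
  rw [this, E_zero_op h (by omega)]

/-- Intertwining: if `D ∘ f = f ∘ D'` then `E D h N (f p) = f (E D' h N p)`. -/
lemma E_intertwine {τ : Type*} {D : Module.End R (MvPolynomial σ R)}
    {D' : Module.End R (MvPolynomial τ R)} {f : MvPolynomial τ R →ₗ[R] MvPolynomial σ R}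
    (hf : ∀ q, D (f q) = f (D' q)) (h : R) (N : ℕ) (p : MvPolynomial τ R) :
    E D h N (f p) = f (E D' h N p) := by
  have hpow : ∀ (k : ℕ) (q), (D ^ k) (f q) = f ((D' ^ k) q) := by
    intro k
    induction k with
    | zero => intro q; simp
    | succ k ih =>
        intro q
        rw [pow_succ, pow_succ, Module.End.mul_apply, Module.End.mul_apply, hf, ih]
  unfold E
  rw [map_sum]
  apply Finset.sum_congr rfl
  intro k _
  rw [hpow, LinearMap.map_smul_of_tower, LinearMap.map_smul_of_tower]

end Exp

section Concrete
variable {ι : Type*} [Fintype ι] [DecidableEq ι] {R : Type*} [CommRing R]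

/-- A generic "constant coefficient second order operator". -/
noncomputable def dform {τ : Type*} (c : ι → ι → R) (f g : ι → τ) :
    Module.End R (MvPolynomial τ R) :=
  ∑ i : ι, ∑ j : ι,
    c i j • ((pderiv (f i)).toLinearMap ∘ₗ (pderiv (g j)).toLinearMap)

lemma secOrd_dform {τ : Type*} (c : ι → ι → R) (f g : ι → τ) :
    SecOrd (dform c f g) :=
  SecOrd.sum _ _ fun i _ => SecOrd.sum _ _ fun j _ => (secOrd_pp (f i) (g j)).smul _

lemma commute_pd {τ : Type*} (a b : τ) :
    Commute ((pderiv (R := R) a).toLinearMap) ((pderiv b).toLinearMap) :=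
  LinearMap.ext fun p => pderiv_comm' a b p

lemma commute_dform {τ : Type*} (c c' : ι → ι → R) (f g f' g' : ι → τ) :
    Commute (dform c f g) (dform c' f' g') := by
  apply Commute.sum_left
  intro i _
  apply Commute.sum_left
  intro j _
  apply Commute.sum_right
  intro i' _
  apply Commute.sum_right
  intro j' _
  apply Commute.smul_left
  apply Commute.smul_right
  rw [← Module.End.mul_eq_comp, ← Module.End.mul_eq_comp]
  exact Commute.mul_left ((commute_pd _ _).mul_right (commute_pd _ _))
    ((commute_pd _ _).mul_right (commute_pd _ _))

lemma dform_apply {τ : Type*} (c : ι → ι → R) (f g : ι → τ) (p : MvPolynomial τ R) :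
    dform c f g p = ∑ i : ι, ∑ j : ι, c i j • pderiv (f i) (pderiv (g j) p) := by
  unfold dform
  rw [LinearMap.sum_apply]
  apply Finset.sum_congr rfl
  intro i _
  rw [LinearMap.sum_apply]
  apply Finset.sum_congr rfl
  intro j _
  rfl

lemma dform_mul_right {τ : Type*} (c : ι → ι → R) (f g : ι → τ)
    (x y : MvPolynomial τ R) (hfy : ∀ i, pderiv (f i) y = 0)
    (hgy : ∀ j, pderiv (g j) y = 0) :
    dform c f g (x * y) = dform c f g x * y := by
  rw [dform_apply, dform_apply, Finset.sum_mul]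
  apply Finset.sum_congr rfl
  intro i _
  rw [Finset.sum_mul]
  apply Finset.sum_congr rfl
  intro j _
  rw [pderiv_mul, hgy, mul_zero, add_zero, pderiv_mul, hfy, mul_zero, add_zero,
    smul_mul_assoc]

lemma dform_pow_mul_right {τ : Type*} (c : ι → ι → R) (f g : ι → τ)
    (x y : MvPolynomial τ R) (hfy : ∀ i, pderiv (f i) y = 0)
    (hgy : ∀ j, pderiv (g j) y = 0) (k : ℕ) :
    (dform c f g ^ k) (x * y) = (dform c f g ^ k) x * y := by
  induction k generalizing x with
  | zero => simp
  | succ k ih =>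
      rw [pow_succ', Module.End.mul_apply, Module.End.mul_apply,
        ih, dform_mul_right c f g _ y hfy hgy]

variable [Algebra ℚ R]

lemma E_dform_mul_right {τ : Type*} (c : ι → ι → R) (f g : ι → τ) (h : R) (N : ℕ)
    (x y : MvPolynomial τ R) (hfy : ∀ i, pderiv (f i) y = 0)
    (hgy : ∀ j, pderiv (g j) y = 0) :
    E (dform c f g) h N (x * y) = E (dform c f g) h N x * y := by
  unfold E
  rw [Finset.sum_mul]
  apply Finset.sum_congr rfl
  intro k _
  rw [dform_pow_mul_right c f g x y hfy hgy, smul_mul_assoc, smul_mul_assoc]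

lemma E_dform_mul_left {τ : Type*} (c : ι → ι → R) (f g : ι → τ) (h : R) (N : ℕ)
    (x y : MvPolynomial τ R) (hfx : ∀ i, pderiv (f i) x = 0)
    (hgx : ∀ j, pderiv (g j) x = 0) :
    E (dform c f g) h N (x * y) = x * E (dform c f g) h N y := by
  rw [mul_comm x y, E_dform_mul_right c f g h N y x hfx hgx, mul_comm]

section Rename
variable {τ τ' : Type*}

lemma pderiv_rename_zero (e : τ → τ') (t : τ') (h : t ∉ Set.range e)
    (p : MvPolynomial τ R) : pderiv t (rename e p) = 0 := by
  classical
  apply pderiv_eq_zero_of_notMem_vars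
  intro hv
  obtain ⟨s, _, rfl⟩ := Finset.mem_image.mp (vars_rename e p hv)
  exact h ⟨s, rfl⟩

lemma pderiv_elim (i : ι) (p : MvPolynomial (ι ⊕ ι) R) :
    pderiv i (rename (Sum.elim (id : ι → ι) id) p) =
      rename (Sum.elim (id : ι → ι) id)
        (pderiv (Sum.inl i) p + pderiv (Sum.inr i) p) := by
  induction p using MvPolynomial.induction_on with
  | C a => simp
  | add p q hp hq =>
      simp only [map_add, hp, hq]
      ring
  | mul_X p s ih =>
      rcases s with a | a <;>
      · simp only [map_mul, rename_X, pderiv_mul, ih, map_add, Sum.elim_inl, Sum.elim_inr,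
          id_eq, pderiv_X]
        by_cases h : a = i
        · subst h
          simp [Pi.single_apply]
          ring
        · simp [Pi.single_apply, h, Ne.symm h]
          ring

lemma dform_rename (e : ι → τ) (he : Function.Injective e) (c : ι → ι → R)
    (u : MvPolynomial ι R) :
    dform c (fun i => e i) (fun j => e j) (rename e u) =
      rename e (dform c (id : ι → ι) id u) := by
  rw [dform_apply, dform_apply, map_sum]
  apply Finset.sum_congr rfl
  intro i _
  rw [map_sum]
  apply Finset.sum_congr rfl
  intro j _
  rw [map_smul, pderiv_rename he, pderiv_rename he]
  simp

lemma lap_rename_elim (β : ι → ι → R) (q : MvPolynomial (ι ⊕ ι) R) :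
    dform β (id : ι → ι) id (rename (Sum.elim (id : ι → ι) id) q) =
      rename (Sum.elim (id : ι → ι) id)
        ((((dform β Sum.inl Sum.inr + dform β Sum.inr Sum.inl) +
          (dform β Sum.inl Sum.inl + dform β Sum.inr Sum.inr) :
            Module.End R (MvPolynomial (ι ⊕ ι) R))) q) := by
  simp only [LinearMap.add_apply, dform_apply, id_eq, pderiv_elim, map_add, map_sum,
    map_smul, smul_add, Finset.sum_add_distrib]
  abel

lemma m_mul_inl_inr (a b : MvPolynomial ι R) :
    rename (Sum.elim (id : ι → ι) id) (rename Sum.inl a * rename Sum.inr b) = a * b := by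
  simp [rename_rename, Sum.elim_comp_inl, Sum.elim_comp_inr, rename_id]

end Rename

section Main
variable (β : ι → ι → R) [Algebra ℚ R] (ℏ : R)

lemma contr_eq_dform : contr R β = dform β Sum.inl Sum.inr := rfl

lemma secOrd_contr : SecOrd (contr R β) := by
  rw [contr_eq_dform]; exact secOrd_dform _ _ _

lemma deg_mul_inl_inr (u v : MvPolynomial ι R) :
    (rename (Sum.inl : ι → ι ⊕ ι) u * rename (Sum.inr : ι → ι ⊕ ι) v).totalDegree
      ≤ u.totalDegree + v.totalDegree :=
  (totalDegree_mul _ _).trans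
    (add_le_add (totalDegree_rename_le _ _) (totalDegree_rename_le _ _))

lemma wick_eq_E (u v : MvPolynomial ι R) {N : ℕ}
    (hN : u.totalDegree + v.totalDegree + 1 ≤ N) :
    wick R β ℏ u v = rename (Sum.elim (id : ι → ι) id)
      (E (contr R β) ℏ N (rename Sum.inl u * rename Sum.inr v)) := by
  show rename (Sum.elim id id)
      (E (contr R β) ℏ (u.totalDegree + v.totalDegree + 1)
        (rename Sum.inl u * rename Sum.inr v)) = _
  congr 1
  exact (E_stable (secOrd_contr β) ℏ
    (by have := deg_mul_inl_inr (R := R) u v; omega) hN).symm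

lemma wick_deg (u v : MvPolynomial ι R) :
    (wick R β ℏ u v).totalDegree ≤ u.totalDegree + v.totalDegree := by
  refine (totalDegree_rename_le _ _).trans ?_
  exact (E_deg (secOrd_contr β) ℏ _ _).trans (deg_mul_inl_inr u v)

/-- The key conjugation formula: the Wick product is the ordinary product
conjugated by `exp((ℏ/2)Δ)`. -/
lemma wick_eq_conj (hβ : ∀ i j, β i j = β j i) (u v : MvPolynomial ι R)
    (c : R) (hc : (2 : R) * c = ℏ) {N : ℕ}
    (hN : u.totalDegree + v.totalDegree + 1 ≤ N) :
    wick R β ℏ u v =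
      E (dform β (id : ι → ι) id) c N
        (E (dform β (id : ι → ι) id) (-c) N u *
         E (dform β (id : ι → ι) id) (-c) N v) := by
  set Δ : Module.End R (MvPolynomial ι R) := dform β (id : ι → ι) id with hΔ
  have hsec : SecOrd Δ := secOrd_dform _ _ _
  set Pu : MvPolynomial ι R := E Δ (-c) N u with hPu
  set Pv : MvPolynomial ι R := E Δ (-c) N v with hPv
  have hdu : Pu.totalDegree ≤ u.totalDegree := E_deg hsec _ _ _
  have hdv : Pv.totalDegree ≤ v.totalDegree := E_deg hsec _ _ _
  set X : MvPolynomial (ι ⊕ ι) R := rename Sum.inl Pu with hX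
  set Y : MvPolynomial (ι ⊕ ι) R := rename Sum.inr Pv with hY
  have hXY : (X * Y).totalDegree + 1 ≤ N := by
    have h0 := (deg_mul_inl_inr Pu Pv).trans (add_le_add hdu hdv)
    rw [← hX, ← hY] at h0
    omega
  set G : Module.End R (MvPolynomial (ι ⊕ ι) R) :=
    dform β Sum.inl Sum.inr + dform β Sum.inr Sum.inl with hG
  set L : Module.End R (MvPolynomial (ι ⊕ ι) R) := dform β Sum.inl Sum.inl with hL
  set Rr : Module.End R (MvPolynomial (ι ⊕ ι) R) := dform β Sum.inr Sum.inr with hRr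
  have hsecG : SecOrd G := (secOrd_dform _ _ _).add (secOrd_dform _ _ _)
  have hsecL : SecOrd L := secOrd_dform _ _ _
  have hsecR : SecOrd Rr := secOrd_dform _ _ _
  have cd : ∀ (f g f' g' : ι → ι ⊕ ι),
      Commute (dform β f g) (dform β f' g') := fun f g f' g' => commute_dform β β f g f' g'
  -- vanishing of mismatched derivatives
  have hvL : ∀ (q : MvPolynomial ι R) (i : ι),
      pderiv (Sum.inl i) (rename (Sum.inr : ι → ι ⊕ ι) q) = 0 := fun q i =>
    pderiv_rename_zero Sum.inr _ (by simp) q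
  have hvR : ∀ (q : MvPolynomial ι R) (i : ι),
      pderiv (Sum.inr i) (rename (Sum.inl : ι → ι ⊕ ι) q) = 0 := fun q i =>
    pderiv_rename_zero Sum.inl _ (by simp) q
  -- Step A: E Δ c N commutes with the multiplication map m.
  have stepA : ∀ q : MvPolynomial (ι ⊕ ι) R,
      E Δ c N (rename (Sum.elim (id : ι → ι) id) q) =
        rename (Sum.elim (id : ι → ι) id) (E (G + (L + Rr)) c N q) := by
    intro q
    exact E_intertwine (f := (rename (Sum.elim (id : ι → ι) id)).toLinearMap)
      (fun q' => by
        have := lap_rename_elim β q'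
        simpa [hG, hL, hRr, add_assoc] using this) c N q
  -- Step B: inner exponentials act factorwise and cancel.
  have hBR : E Rr c N (X * Y) = X * rename Sum.inr v := by
    rw [hRr, E_dform_mul_left β Sum.inr Sum.inr c N X Y (hvR Pu) (hvR Pu)]
    congr 1
    have : E (dform β Sum.inr Sum.inr) c N (rename Sum.inr Pv)
        = rename Sum.inr (E Δ c N Pv) :=
      E_intertwine (f := (rename (Sum.inr : ι → ι ⊕ ι)).toLinearMap)
        (fun q' => by
          have := dform_rename (Sum.inr : ι → ι ⊕ ι) Sum.inr_injective β q'
          simpa using this) c N Pv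
    rw [hY, this, hPv, E_inv hsec c (by omega)]
  have hBL : E L c N (X * rename Sum.inr v) = rename Sum.inl u * rename Sum.inr v := by
    rw [hL, E_dform_mul_right β Sum.inl Sum.inl c N X (rename Sum.inr v)
      (hvL v) (hvL v)]
    refine congrArg (· * rename Sum.inr v) ?_
    have : E (dform β Sum.inl Sum.inl) c N (rename Sum.inl Pu)
        = rename Sum.inl (E Δ c N Pu) :=
      E_intertwine (f := (rename (Sum.inl : ι → ι ⊕ ι)).toLinearMap)
        (fun q' => by
          have := dform_rename (Sum.inl : ι → ι ⊕ ι) Sum.inl_injective β q'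
          simpa using this) c N Pu
    rw [hX, this, hPu, E_inv hsec c (by omega)]
  -- Step C: the remaining exponential is exp(ℏ Γ).
  have hswap : dform β Sum.inr Sum.inl = dform β Sum.inl Sum.inr := by
    unfold dform
    rw [Finset.sum_comm]
    apply Finset.sum_congr rfl
    intro i _
    apply Finset.sum_congr rfl
    intro j _
    rw [hβ j i]
    congr 1
    exact LinearMap.ext fun p => pderiv_comm' _ _ p
  have hGE : ∀ q : MvPolynomial (ι ⊕ ι) R, E G c N q = E (contr R β) ℏ N q := by
    intro q
    rw [hG, hswap, ← two_smul R (dform β Sum.inl Sum.inr), E_smul_op, hc,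
      contr_eq_dform]
  -- assemble
  rw [show Pu * Pv = rename (Sum.elim (id : ι → ι) id) (X * Y) from
    (m_mul_inl_inr Pu Pv).symm]
  rw [stepA]
  rw [E_split hsecG (hsecL.add hsecR)
    ((cd _ _ _ _).add_right (cd _ _ _ _) |>.add_left
      ((cd _ _ _ _).add_right (cd _ _ _ _))) c hXY]
  rw [E_split hsecL hsecR (cd _ _ _ _) c hXY]
  rw [hBR, hBL, hGE]
  exact wick_eq_E β ℏ u v hN

end Main
end Concrete
end WickAux

/-- the Wick/contraction product on the symmetric algebra `S(V)`
(with symmetric bilinear form `β` and parameter `ℏ`) is associative. -/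
theorem wick_assoc {ι : Type*} [Fintype ι] [DecidableEq ι]
    (R : Type*) [CommRing R] [Algebra ℚ R] (β : ι → ι → R)
    (hβ : ∀ i j, β i j = β j i) (ℏ : R) (u v w : MvPolynomial ι R) :
    wick R β ℏ (wick R β ℏ u v) w = wick R β ℏ u (wick R β ℏ v w) := by
  set c : R := ℏ * algebraMap ℚ R 2⁻¹ with hcdef
  have hc : (2 : R) * c = ℏ := by
    have h2 : (2 : R) * algebraMap ℚ R 2⁻¹ = 1 := by
      rw [show (2 : R) = algebraMap ℚ R 2 from (map_ofNat (algebraMap ℚ R) 2).symm,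
        ← map_mul]
      norm_num
    calc (2 : R) * (ℏ * algebraMap ℚ R 2⁻¹) = ℏ * ((2 : R) * algebraMap ℚ R 2⁻¹) := by
          ring
      _ = ℏ := by rw [h2, mul_one]
  set N : ℕ := u.totalDegree + v.totalDegree + w.totalDegree + 1 with hNdef
  set Δ : Module.End R (MvPolynomial ι R) := WickAux.dform β (id : ι → ι) id with hΔ
  have hsec : WickAux.SecOrd Δ := WickAux.secOrd_dform _ _ _
  set Pu := WickAux.E Δ (-c) N u with hPu
  set Pv := WickAux.E Δ (-c) N v with hPv
  set Pw := WickAux.E Δ (-c) N w with hPw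
  have hdu : Pu.totalDegree ≤ u.totalDegree := WickAux.E_deg hsec _ _ _
  have hdv : Pv.totalDegree ≤ v.totalDegree := WickAux.E_deg hsec _ _ _
  have hdw : Pw.totalDegree ≤ w.totalDegree := WickAux.E_deg hsec _ _ _
  have huv : wick R β ℏ u v = WickAux.E Δ c N (Pu * Pv) :=
    WickAux.wick_eq_conj β ℏ hβ u v c hc (by omega)
  have hvw : wick R β ℏ v w = WickAux.E Δ c N (Pv * Pw) :=
    WickAux.wick_eq_conj β ℏ hβ v w c hc (by omega)
  have hinv1 : WickAux.E Δ (-c) N (WickAux.E Δ c N (Pu * Pv)) = Pu * Pv := by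
    have hdeg : (Pu * Pv).totalDegree + 1 ≤ N := by
      have := totalDegree_mul Pu Pv
      omega
    have h := WickAux.E_inv hsec (-c) (N := N) (p := Pu * Pv) hdeg
    rwa [neg_neg] at h
  have hinv2 : WickAux.E Δ (-c) N (WickAux.E Δ c N (Pv * Pw)) = Pv * Pw := by
    have hdeg : (Pv * Pw).totalDegree + 1 ≤ N := by
      have := totalDegree_mul Pv Pw
      omega
    have h := WickAux.E_inv hsec (-c) (N := N) (p := Pv * Pw) hdeg
    rwa [neg_neg] at h
  have hL : wick R β ℏ (wick R β ℏ u v) w =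
      WickAux.E Δ c N (WickAux.E Δ (-c) N (wick R β ℏ u v) * Pw) :=
    WickAux.wick_eq_conj β ℏ hβ (wick R β ℏ u v) w c hc
      (by have := WickAux.wick_deg β ℏ u v; omega)
  have hR : wick R β ℏ u (wick R β ℏ v w) =
      WickAux.E Δ c N (Pu * WickAux.E Δ (-c) N (wick R β ℏ v w)) :=
    WickAux.wick_eq_conj β ℏ hβ u (wick R β ℏ v w) c hc
      (by have := WickAux.wick_deg β ℏ v w; omega)
  rw [hL, hR, huv, hvw, hinv1, hinv2, mul_assoc]
end
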